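/- For every prime p and every positive integer h with gcd(h,p)=1, the arithmetic progression {p·n + h : n ∈ ℕ ∪ {0}} contains infinitely many prime numbers. -/
import Mathlib

def A (h k : ℕ) : Set ℕ := {m | ∃ n : ℕ, m = k * n + h}

theorem stmt_0 (p h : ℕ) (hp : p.Prime) (hh : 0 < h) (hco : Nat.gcd h p = 1) :
    {q : ℕ | q.Prime ∧ q ∈ A h p}.Infinite := by
  haveI : NeZero p := ⟨hp.pos.ne'⟩
  have ha : IsUnit (h : ZMod p) := by
    rw [ZMod.isUnit_iff_coprime]
    exact hco
  apply Set.infinite_of_forall_exists_gt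
  intro a
  obtain ⟨q, hq1, hq2, hq3⟩ := Nat.forall_exists_prime_gt_and_eq_mod ha (max a h)
  refine ⟨q, ⟨hq2, ?_⟩, lt_of_le_of_lt (le_max_left a h) hq1⟩
  have hmod : q % p = h % p := by
    have := (ZMod.natCast_eq_natCast_iff' q h p).mp hq3
    exact this
  have hqh : h ≤ q := le_of_lt (lt_of_le_of_lt (le_max_right a h) hq1)
  have : p ∣ q - h := (Nat.modEq_iff_dvd' hqh).mp (Nat.ModEq.symm hmod)
  obtain ⟨n, hn⟩ := this
  exact ⟨n, by omega⟩
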